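/- Let f : [a,b] → ℝ be such that f' is absolutely continuous on [a,b] and f'' ∈ L^∞([a,b]). Then |(1/2)[(f((3a+b)/4)+f((a+3b)/4))/2 + (f(a)+f(b))/2] + ((b-a)/8)·(f'((3a+b)/4) - f'((a+3b)/4))/2 - (1/(b-a))∫_a^b f(t) dt| ≤ (1/64)(b-a)²·‖f''‖_∞. -/

import Mathlib

open MeasureTheory Set

private lemma poly_deriv (c3 c2 c1 c0 t : ℝ) :
    HasDerivAt (fun x : ℝ => c3*x^3 + c2*x^2 + c1*x + c0)
      (3*c3*t^2 + 2*c2*t + c1) t := by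
  have h3 := (hasDerivAt_pow 3 t).const_mul c3
  have h2 := (hasDerivAt_pow 2 t).const_mul c2
  have h1 := (hasDerivAt_id t).const_mul c1
  have := ((h3.add h2).add h1).add_const c0
  refine this.congr_deriv ?_
  norm_num
  ring

private lemma piece_bound (f f' f'' g g' w W : ℝ → ℝ) (M c d : ℝ) (hcd : c ≤ d)
    (hf' : ∀ t ∈ Icc c d, HasDerivAt f (f' t) t)
    (hf'' : ∀ t ∈ Icc c d, HasDerivAt f' (f'' t) t)
    (hg : ∀ t, HasDerivAt g (g' t) t)
    (hg' : ∀ t, HasDerivAt g' (-1) t)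
    (habs : ∀ t ∈ Icc c d, |g t| = w t)
    (hwcont : Continuous w)
    (hW : ∀ t, HasDerivAt W (w t) t)
    (hint : IntervalIntegrable f'' volume c d)
    (hMae : ∀ᵐ t ∂(volume.restrict (Icc c d)), |f'' t| ≤ M) :
    |(g d * f' d - g c * f' c) - (g' d * f d - g' c * f c) - ∫ t in c..d, f t|
      ≤ M * (W d - W c) := by
  have huicc : uIcc c d = Icc c d := uIcc_of_le hcd
  have hfc : ContinuousOn f (uIcc c d) := by
    rw [huicc]; exact fun t ht => (hf' t ht).continuousAt.continuousWithinAt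
  have hf'cont : ContinuousOn f' (uIcc c d) := by
    rw [huicc]; exact fun t ht => (hf'' t ht).continuousAt.continuousWithinAt
  have hgcont : Continuous g := by
    rw [continuous_iff_continuousAt]; exact fun t => (hg t).continuousAt
  have hg'cont : Continuous g' := by
    rw [continuous_iff_continuousAt]; exact fun t => (hg' t).continuousAt
  have hintf : IntervalIntegrable f volume c d := hfc.intervalIntegrable
  have hintf' : IntervalIntegrable f' volume c d := hf'cont.intervalIntegrable
  have hintg' : IntervalIntegrable g' volume c d := hg'cont.intervalIntegrable c d
  -- integration by parts twice
  have step1 : ∫ t in c..d, g t * f'' t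
      = g d * f' d - g c * f' c - ∫ t in c..d, g' t * f' t := by
    apply intervalIntegral.integral_mul_deriv_eq_deriv_mul
      (fun x _ => hg x) (fun x hx => hf'' x (huicc ▸ hx)) hintg' hint
  have step2 : ∫ t in c..d, g' t * f' t
      = g' d * f d - g' c * f c - ∫ t in c..d, (-1 : ℝ) * f t := by
    apply intervalIntegral.integral_mul_deriv_eq_deriv_mul
      (fun x _ => hg' x) (fun x hx => hf' x (huicc ▸ hx))
      (intervalIntegrable_const) hintf'
  have stepneg : ∫ t in c..d, (-1 : ℝ) * f t = - ∫ t in c..d, f t := by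
    simp [neg_one_mul, intervalIntegral.integral_neg]
  have key : (g d * f' d - g c * f' c) - (g' d * f d - g' c * f c) - (∫ t in c..d, f t)
      = ∫ t in c..d, g t * f'' t := by
    rw [step1, step2, stepneg]; ring
  rw [key]
  have hintgf : IntervalIntegrable (fun t => g t * f'' t) volume c d :=
    hint.continuousOn_mul hgcont.continuousOn
  calc |∫ t in c..d, g t * f'' t| ≤ ∫ t in c..d, |g t * f'' t| :=
        intervalIntegral.abs_integral_le_integral_abs hcd
    _ ≤ ∫ t in c..d, |g t| * M := by
        apply intervalIntegral.integral_mono_ae_restrict hcd hintgf.abs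
          ((hgcont.abs.intervalIntegrable c d).mul_const M)
        filter_upwards [hMae] with t ht
        rw [abs_mul]
        exact mul_le_mul_of_nonneg_left ht (abs_nonneg _)
    _ = ∫ t in c..d, w t * M := by
        apply intervalIntegral.integral_congr
        intro t ht
        simp only
        rw [habs t (huicc ▸ ht)]
    _ = (W d - W c) * M := by
        rw [intervalIntegral.integral_mul_const,
          intervalIntegral.integral_eq_sub_of_hasDerivAt (fun t _ => hW t)
            (hwcont.intervalIntegrable c d)]
    _ = M * (W d - W c) := mul_comm _ _

theorem best_estimator_three_quarters
    (a b : ℝ) (hab : a < b) (f f' f'' : ℝ → ℝ) (M : ℝ)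
    (hf' : ∀ t ∈ Icc a b, HasDerivAt f (f' t) t)
    (hf'' : ∀ t ∈ Icc a b, HasDerivAt f' (f'' t) t)
    (hint : IntervalIntegrable f'' volume a b)
    (hM : ∀ᵐ t ∂volume, t ∈ Icc a b → |f'' t| ≤ M) :
    |(1/2) * ((f ((3*a + b)/4) + f ((a + 3*b)/4)) / 2 + (f a + f b) / 2)
      + ((b - a) / 8) * ((f' ((3*a + b)/4) - f' ((a + 3*b)/4)) / 2)
      - (1 / (b - a)) * ∫ t in a..b, f t|
    ≤ (1/64) * (b - a)^2 * M := by
  set p := (3*a + b)/4 with hp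
  set q := (a + 3*b)/4 with hq
  have hap : a ≤ p := by rw [hp]; linarith
  have hpq : p ≤ q := by rw [hp, hq]; linarith
  have hqb : q ≤ b := by rw [hq]; linarith
  have hba : (0:ℝ) < b - a := by linarith
  -- restrict hypotheses to subintervals
  have sub1 : Icc a p ⊆ Icc a b := Icc_subset_Icc le_rfl (by linarith)
  have sub2 : Icc p q ⊆ Icc a b := Icc_subset_Icc (by linarith) (by linarith)
  have sub3 : Icc q b ⊆ Icc a b := Icc_subset_Icc (by linarith) le_rfl
  have hMr : ∀ c d : ℝ, Icc c d ⊆ Icc a b →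
      ∀ᵐ t ∂(volume.restrict (Icc c d)), |f'' t| ≤ M := by
    intro c d hsub
    filter_upwards [ae_restrict_mem measurableSet_Icc, ae_restrict_of_ae hM] with t ht hMt
    exact hMt (hsub ht)
  have hint1 : IntervalIntegrable f'' volume a p :=
    hint.mono_set (by rw [uIcc_of_le hap, uIcc_of_le (le_of_lt hab)]; exact sub1)
  have hint2 : IntervalIntegrable f'' volume p q :=
    hint.mono_set (by rw [uIcc_of_le hpq, uIcc_of_le (le_of_lt hab)]; exact sub2)
  have hint3 : IntervalIntegrable f'' volume q b :=
    hint.mono_set (by rw [uIcc_of_le hqb, uIcc_of_le (le_of_lt hab)]; exact sub3)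
  -- kernels
  -- K1 t = -t^2/2 + (3a+b)/4 t - a(a+b)/4, K1' t = -t + (3a+b)/4
  -- W1 t = -t^3/6 + (3a+b)/8 t^2 - a(a+b)/4 t
  have B1 := piece_bound f f' f''
      (fun x => 0*x^3 + (-1/2)*x^2 + ((3*a+b)/4)*x + (-(a*(a+b))/4))
      (fun x => 0*x^3 + 0*x^2 + (-1)*x + ((3*a+b)/4))
      (fun x => 0*x^3 + (-1/2)*x^2 + ((3*a+b)/4)*x + (-(a*(a+b))/4))
      (fun x => (-1/6)*x^3 + ((3*a+b)/8)*x^2 + (-(a*(a+b))/4)*x + 0)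
      M a p hap (fun t ht => hf' t (sub1 ht)) (fun t ht => hf'' t (sub1 ht))
      (fun t => by convert poly_deriv 0 (-1/2) ((3*a+b)/4) (-(a*(a+b))/4) t using 1; ring)
      (fun t => by convert poly_deriv 0 0 (-1) ((3*a+b)/4) t using 1; ring)
      (fun t ht => by
        rw [abs_of_nonneg]
        obtain ⟨h1, h2⟩ := ht
        rw [hp] at h2
        nlinarith [mul_nonneg (sub_nonneg.2 h1) (show (0:ℝ) ≤ (a+b)/2 - t by linarith)])
      (by fun_prop)
      (fun t => by convert poly_deriv (-1/6) ((3*a+b)/8) (-(a*(a+b))/4) 0 t using 1; ring)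
      hint1 (hMr a p sub1)
  have B2 := piece_bound f f' f''
      (fun x => 0*x^3 + (-1/2)*x^2 + ((a+b)/2)*x + (-((a+b)^2)/8))
      (fun x => 0*x^3 + 0*x^2 + (-1)*x + ((a+b)/2))
      (fun x => 0*x^3 + (1/2)*x^2 + (-(a+b)/2)*x + ((a+b)^2/8))
      (fun x => (1/6)*x^3 + (-(a+b)/4)*x^2 + ((a+b)^2/8)*x + 0)
      M p q hpq (fun t ht => hf' t (sub2 ht)) (fun t ht => hf'' t (sub2 ht))
      (fun t => by convert poly_deriv 0 (-1/2) ((a+b)/2) (-((a+b)^2)/8) t using 1; ring)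
      (fun t => by convert poly_deriv 0 0 (-1) ((a+b)/2) t using 1; ring)
      (fun t ht => by
        rw [abs_of_nonpos]
        · ring
        · nlinarith [sq_nonneg (t - (a+b)/2)])
      (by fun_prop)
      (fun t => by convert poly_deriv (1/6) (-(a+b)/4) ((a+b)^2/8) 0 t using 1; ring)
      hint2 (hMr p q sub2)
  have B3 := piece_bound f f' f''
      (fun x => 0*x^3 + (-1/2)*x^2 + ((a+3*b)/4)*x + (-(b*(a+b))/4))
      (fun x => 0*x^3 + 0*x^2 + (-1)*x + ((a+3*b)/4))
      (fun x => 0*x^3 + (-1/2)*x^2 + ((a+3*b)/4)*x + (-(b*(a+b))/4))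
      (fun x => (-1/6)*x^3 + ((a+3*b)/8)*x^2 + (-(b*(a+b))/4)*x + 0)
      M q b hqb (fun t ht => hf' t (sub3 ht)) (fun t ht => hf'' t (sub3 ht))
      (fun t => by convert poly_deriv 0 (-1/2) ((a+3*b)/4) (-(b*(a+b))/4) t using 1; ring)
      (fun t => by convert poly_deriv 0 0 (-1) ((a+3*b)/4) t using 1; ring)
      (fun t ht => by
        rw [abs_of_nonneg]
        obtain ⟨h1, h2⟩ := ht
        rw [hq] at h1
        nlinarith [mul_nonneg (sub_nonneg.2 h2) (show (0:ℝ) ≤ t - (a+b)/2 by linarith)])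
      (by fun_prop)
      (fun t => by convert poly_deriv (-1/6) ((a+3*b)/8) (-(b*(a+b))/4) 0 t using 1; ring)
      hint3 (hMr q b sub3)
  -- split the integral
  have hfc : ∀ c d : ℝ, Icc c d ⊆ Icc a b → c ≤ d → IntervalIntegrable f volume c d := by
    intro c d hsub hcd
    apply ContinuousOn.intervalIntegrable
    rw [uIcc_of_le hcd]
    exact fun t ht => (hf' t (hsub ht)).continuousAt.continuousWithinAt
  have hsplit : (∫ t in a..p, f t) + (∫ t in p..q, f t) + (∫ t in q..b, f t)
      = ∫ t in a..b, f t := by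
    rw [intervalIntegral.integral_add_adjacent_intervals (hfc a p sub1 hap) (hfc p q sub2 hpq),
      intervalIntegral.integral_add_adjacent_intervals
        (hfc a q (Icc_subset_Icc le_rfl hqb) (le_trans hap hpq)) (hfc q b sub3 hqb)]
  -- combine
  set I1 := ∫ t in a..p, f t
  set I2 := ∫ t in p..q, f t
  set I3 := ∫ t in q..b, f t
  set I := ∫ t in a..b, f t
  have hX : (b - a) * ((1/2) * ((f p + f q) / 2 + (f a + f b) / 2)
      + ((b - a) / 8) * ((f' p - f' q) / 2) - (1 / (b - a)) * I)
      = (((fun x => 0*x^3 + (-1/2)*x^2 + ((3*a+b)/4)*x + (-(a*(a+b))/4)) p * f' p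
          - (fun x => 0*x^3 + (-1/2)*x^2 + ((3*a+b)/4)*x + (-(a*(a+b))/4)) a * f' a)
        - ((fun x => 0*x^3 + 0*x^2 + (-1)*x + ((3*a+b)/4)) p * f p
          - (fun x => 0*x^3 + 0*x^2 + (-1)*x + ((3*a+b)/4)) a * f a) - I1)
      + ((((fun x => 0*x^3 + (-1/2)*x^2 + ((a+b)/2)*x + (-((a+b)^2)/8)) q * f' q
          - (fun x => 0*x^3 + (-1/2)*x^2 + ((a+b)/2)*x + (-((a+b)^2)/8)) p * f' p)
        - ((fun x => 0*x^3 + 0*x^2 + (-1)*x + ((a+b)/2)) q * f q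
          - (fun x => 0*x^3 + 0*x^2 + (-1)*x + ((a+b)/2)) p * f p) - I2))
      + ((((fun x => 0*x^3 + (-1/2)*x^2 + ((a+3*b)/4)*x + (-(b*(a+b))/4)) b * f' b
          - (fun x => 0*x^3 + (-1/2)*x^2 + ((a+3*b)/4)*x + (-(b*(a+b))/4)) q * f' q)
        - ((fun x => 0*x^3 + 0*x^2 + (-1)*x + ((a+3*b)/4)) b * f b
          - (fun x => 0*x^3 + 0*x^2 + (-1)*x + ((a+3*b)/4)) q * f q) - I3)) := by
    beta_reduce
    rw [← hsplit, hp, hq]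
    have hcancel : (b - a) * ((1 / (b - a)) * (I1 + I2 + I3)) = I1 + I2 + I3 := by
      rw [← mul_assoc, mul_one_div, div_self (ne_of_gt hba), one_mul]
    rw [mul_sub, hcancel]
    ring
  beta_reduce at B1 B2 B3 hX
  have hE : (b - a) * |(1/2) * ((f p + f q) / 2 + (f a + f b) / 2)
      + ((b - a) / 8) * ((f' p - f' q) / 2) - (1 / (b - a)) * I|
      ≤ (b - a) * ((1/64) * (b - a)^2 * M) := by
    rw [show (b - a) * |(1/2) * ((f p + f q) / 2 + (f a + f b) / 2)
        + ((b - a) / 8) * ((f' p - f' q) / 2) - (1 / (b - a)) * I|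
      = |(b - a) * ((1/2) * ((f p + f q) / 2 + (f a + f b) / 2)
        + ((b - a) / 8) * ((f' p - f' q) / 2) - (1 / (b - a)) * I)|
      from by rw [abs_mul, abs_of_pos hba], hX]
    calc |_ + _ + _| ≤ _ := abs_add_three _ _ _
      _ ≤ _ := add_le_add (add_le_add B1 B2) B3
      _ = (b - a) * ((1/64) * (b - a)^2 * M) := by rw [hp, hq]; ring
  exact (mul_le_mul_iff_right₀ hba).mp hE
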